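/- Let $\lambda : A \times A \to (M, *)$ be a hermitian form. Then the group $M^c_e$ is abelian, $(M^c_e, M, h^c, p^c)$ is a commutative quadratic group (where $h^c$ is the homomorphism induced on the quotient by $h_\lambda$), it satisfies $h^c(p^c(m)) - m = m^*$ for all $m \in M$, and $(\lambda, \mu^c)$ is a quadratic form on $A$ with values in $(M^c_e, M, h^c, p^c)$: for all $a, a' \in A$ one has $\mu^c(a + a') = \mu^c(a) + \mu^c(a') + p^c(\lambda(a, a'))$ and $h^c(\mu^c(a)) = \lambda(a, a)$. -/

import Mathlib

namespace CST

/-- The normal closure of a set in an additive group: the smallest normal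
subgroup containing the set. -/
def nclosure {G : Type*} [AddGroup G] (s : Set G) : AddSubgroup G :=
  sInf {N : AddSubgroup G | N.Normal ∧ s ⊆ N}

instance nclosure_normal {G : Type*} [AddGroup G] (s : Set G) :
    (nclosure s).Normal := by
  constructor
  intro n hn g
  rw [nclosure, AddSubgroup.mem_sInf] at hn ⊢
  intro N hN
  exact hN.1.conj_mem n (hn N hN) g

variable {A M : Type*} [AddCommGroup A] [AddCommGroup M]

/-- The underlying type of the central extension `M ×_lam A` determined by a
bilinear map `lam : A × A → M`. -/
def Ext (lam : A →+ A →+ M) : Type _ := M × A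

namespace Ext

variable (lam : A →+ A →+ M)

/-- The element of `M ×_lam A` given by the pair `(m, a)`. -/
def mkE (m : M) (a : A) : Ext lam := (m, a)

instance : Add (Ext lam) :=
  ⟨fun x y => (x.1 + y.1 - lam x.2 y.2, x.2 + y.2)⟩

instance : Zero (Ext lam) := ⟨((0 : M), (0 : A))⟩

instance : Neg (Ext lam) :=
  ⟨fun x => (-x.1 - lam x.2 x.2, -x.2)⟩

theorem add_def (x y : Ext lam) :
    x + y = (x.1 + y.1 - lam x.2 y.2, x.2 + y.2) := rfl

theorem zero_def : (0 : Ext lam) = ((0 : M), (0 : A)) := rfl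

theorem neg_def (x : Ext lam) : -x = (-x.1 - lam x.2 x.2, -x.2) := rfl

/-- The operation `(m, a) + (m', a') = (m + m' - lam a a', a + a')` makes
`M ×_lam A` into a group. -/
instance : AddGroup (Ext lam) :=
  AddGroup.ofLeftAxioms
    (by
      intro x y z
      simp only [add_def, map_add, AddMonoidHom.add_apply, map_zero]
      show ((x.1 + y.1 - lam x.2 y.2 + z.1 - lam (x.2 + y.2) z.2, x.2 + y.2 + z.2) : M × A)
        = (x.1 + (y.1 + z.1 - lam y.2 z.2) - lam x.2 (y.2 + z.2), x.2 + (y.2 + z.2))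
      refine Prod.ext ?_ ?_ <;>
        simp only [map_add, AddMonoidHom.add_apply] <;> abel)
    (by
      intro x
      simp only [add_def, zero_def, map_zero, AddMonoidHom.zero_apply]
      show ((0 + x.1 - lam 0 x.2, 0 + x.2) : M × A) = x
      refine Prod.ext ?_ ?_ <;> simp)
    (by
      intro x
      simp only [add_def, neg_def, zero_def, map_neg, AddMonoidHom.neg_apply]
      show ((-x.1 - lam x.2 x.2 + x.1 - lam (-x.2) x.2, -x.2 + x.2) : M × A) = ((0 : M), (0 : A))
      refine Prod.ext ?_ ?_ <;>
        simp only [map_neg, AddMonoidHom.neg_apply] <;> abel)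

theorem add_def' (x y : M × A) :
    @HAdd.hAdd (Ext lam) (Ext lam) (Ext lam) instHAdd x y
      = ((x.1 + y.1 - lam x.2 y.2, x.2 + y.2) : M × A) := rfl

theorem neg_def' (x : M × A) :
    @Neg.neg (Ext lam) _ x = ((-x.1 - lam x.2 x.2, -x.2) : M × A) := rfl

/-- The function `h_lam (m, a) = m + m^* + lam a a`. -/
def hfun (star : M →+ M) : Ext lam → M :=
  fun x => x.1 + star x.1 + lam x.2 x.2

/-- The function `p_lam m = (m, 0)`. -/
def pfun : M → Ext lam := fun m => mkE lam m 0

/-- The function `mu_lam a = (0, a)`. -/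
def mufun : A → Ext lam := fun a => mkE lam 0 a

/-- The set of relations `(m^*, -a) - (m, a)` in `M ×_lam A`. -/
def relSet (star : M →+ M) : Set (Ext lam) :=
  {x | ∃ (m : M) (a : A), x = mkE lam (star m) (-a) - mkE lam m a}

end Ext

open Ext

theorem subset_nclosure {G : Type*} [AddGroup G] (s : Set G) : s ⊆ nclosure s :=
  fun x hx => AddSubgroup.mem_sInf.2 fun _ hN => hN.2 hx

theorem nclosure_le {G : Type*} [AddGroup G] {s : Set G} {N : AddSubgroup G}
    (h1 : N.Normal) (h2 : s ⊆ N) : nclosure s ≤ N :=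
  sInf_le ⟨h1, h2⟩

section Aux

variable (lam : A →+ A →+ M) (star : M →+ M)

theorem rel_mem (m : M) (a : A) :
    mkE lam (star m) (-a) - mkE lam m a ∈ nclosure (relSet lam star) :=
  subset_nclosure _ ⟨m, a, rfl⟩

theorem rel_eq (m : M) (a : A) :
    mkE lam (star m) (-a) - mkE lam m a
      = (star m - m - lam a a - lam a a, -a + -a) := by
  show mkE lam (star m) (-a) + -(mkE lam m a) = _
  simp only [mkE, add_def, neg_def, map_neg, AddMonoidHom.neg_apply, neg_neg]
  refine Prod.ext ?_ ?_ <;> simp [add_def', neg_def'] <;> abel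

theorem rel_mem' (m : M) (a : A) :
    ((star m - m - lam a a - lam a a, -a + -a) : Ext lam)
      ∈ nclosure (relSet lam star) :=
  rel_eq lam star m a ▸ rel_mem lam star m a

/-- `h_lam` as an additive homomorphism (needs hermitian symmetry). -/
def hhom (herm : ∀ a a' : A, lam a' a = star (lam a a')) : Ext lam →+ M :=
  AddMonoidHom.mk' (hfun lam star) (by
    intro x y
    simp only [hfun, add_def, map_add, map_sub, AddMonoidHom.add_apply,
      AddMonoidHom.sub_apply]
    rw [herm x.2 y.2]
    abel)

/-- `p_lam` as an additive homomorphism. -/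
def phom : M →+ Ext lam :=
  AddMonoidHom.mk' (pfun lam) (by
    intro m m'
    simp only [pfun, mkE, add_def, map_zero, AddMonoidHom.zero_apply]
    refine Prod.ext ?_ ?_ <;> simp [add_def'])

end Aux

/-- The quotient `M^c_e` is abelian, `(M^c_e, M, h^c, p^c)` is a
commutative quadratic group refining `(M, *)`, and `(lam, mu^c)` is a quadratic
form with values in it. -/
theorem quotient_commutative_quadratic (lam : A →+ A →+ M) (star : M →+ M)
    (star_star : ∀ m : M, star (star m) = m)
    (herm : ∀ a a' : A, lam a' a = star (lam a a')) :
    (∀ x y : Ext lam ⧸ nclosure (relSet lam star), x + y = y + x) ∧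
    ∃ hc : (Ext lam ⧸ nclosure (relSet lam star)) →+ M,
      (∀ (m : M) (a : A),
        hc (QuotientAddGroup.mk (mkE lam m a)) = m + star m + lam a a) ∧
      ∃ pc : M →+ Ext lam ⧸ nclosure (relSet lam star),
        (∀ m : M, pc m = QuotientAddGroup.mk (mkE lam m 0)) ∧
        (∀ x : Ext lam ⧸ nclosure (relSet lam star), pc (hc x) = 2 • x) ∧
        (∀ x : Ext lam ⧸ nclosure (relSet lam star),
          hc (pc (hc x)) = 2 • hc x) ∧
        (∀ m : M, hc (pc m) - m = star m) ∧
        (∀ a a' : A,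
          (QuotientAddGroup.mk (mkE lam 0 (a + a')) :
              Ext lam ⧸ nclosure (relSet lam star))
            = QuotientAddGroup.mk (mkE lam 0 a)
              + QuotientAddGroup.mk (mkE lam 0 a') + pc (lam a a')) ∧
        (∀ a : A, hc (QuotientAddGroup.mk (mkE lam 0 a)) = lam a a) := by
  set N := nclosure (relSet lam star) with hN
  -- `hc` : lift of `hhom` to the quotient
  have hker : ∀ x ∈ N, hhom lam star herm x = 0 := by
    intro x hx
    have hle : N ≤ (hhom lam star herm).ker := by
      refine nclosure_le inferInstance ?_
      rintro _ ⟨m, a, rfl⟩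
      rw [SetLike.mem_coe, AddMonoidHom.mem_ker, map_sub]
      show hfun lam star _ - hfun lam star _ = 0
      simp only [hfun, mkE, map_neg, AddMonoidHom.neg_apply, neg_neg, star_star]
      abel
    exact hle hx
  refine ⟨?_, QuotientAddGroup.lift N (hhom lam star herm) hker, ?_,
    (QuotientAddGroup.mk' N).comp (phom lam), ?_, ?_, ?_, ?_, ?_, ?_⟩
  · -- commutativity
    intro x y
    induction x using QuotientAddGroup.induction_on with
    | H z =>
    induction y using QuotientAddGroup.induction_on with
    | H w =>
    show QuotientAddGroup.mk (z + w) = QuotientAddGroup.mk (w + z)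
    rw [QuotientAddGroup.eq]
    have : -(z + w) + (w + z)
        = (star (lam w.2 z.2) - lam w.2 z.2 - lam 0 0 - lam 0 0,
            -(0:A) + -0) := by
      simp only [add_def, neg_def, map_add, map_neg, map_zero, map_sub,
        AddMonoidHom.add_apply, AddMonoidHom.neg_apply, AddMonoidHom.zero_apply,
        AddMonoidHom.sub_apply]
      rw [← herm w.2 z.2]
      refine Prod.ext ?_ ?_ <;> simp [add_def', neg_def'] <;> abel
    rw [this]
    exact rel_mem' lam star _ 0
  · -- hc on generators
    intro m a
    show hfun lam star (mkE lam m a) = _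
    rfl
  · -- pc m = mk (m, 0)
    intro m
    rfl
  · -- pc (hc x) = 2 • x
    intro x
    induction x using QuotientAddGroup.induction_on with
    | H z =>
    show QuotientAddGroup.mk (pfun lam (hfun lam star z))
        = 2 • (QuotientAddGroup.mk z : Ext lam ⧸ N)
    rw [two_nsmul, ← QuotientAddGroup.mk_add, QuotientAddGroup.eq]
    have : -pfun lam (hfun lam star z) + (z + z)
        = -(mkE lam (star z.1 - z.1 - lam z.2 z.2 - lam z.2 z.2)
            (-z.2 + -z.2)) := by
      simp only [pfun, hfun, mkE, add_def, neg_def, map_add, map_neg, map_zero,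
        map_sub, AddMonoidHom.add_apply, AddMonoidHom.neg_apply,
        AddMonoidHom.zero_apply, AddMonoidHom.sub_apply, neg_neg]
      refine Prod.ext ?_ ?_ <;> simp [add_def', neg_def'] <;> abel
    rw [this]
    exact AddSubgroup.neg_mem _ (rel_mem' lam star z.1 z.2)
  · -- hc (pc (hc x)) = 2 • hc x
    intro x
    induction x using QuotientAddGroup.induction_on with
    | H z =>
    show hfun lam star (pfun lam (hfun lam star z)) = 2 • hfun lam star z
    simp only [hfun, pfun, mkE, map_zero, map_add, two_smul, star_star,
      ← herm z.2 z.2]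
    abel
  · -- hc (pc m) - m = star m
    intro m
    show hfun lam star (pfun lam m) - m = star m
    simp [hfun, pfun, mkE]
  · -- mu additivity
    intro a a'
    show _ = QuotientAddGroup.mk _ + QuotientAddGroup.mk _
        + QuotientAddGroup.mk (pfun lam (lam a a'))
    rw [← QuotientAddGroup.mk_add, ← QuotientAddGroup.mk_add]
    congr 1
    simp only [pfun, mkE, add_def, map_zero, AddMonoidHom.zero_apply, map_add]
    refine Prod.ext ?_ ?_ <;> simp [add_def']
  · -- hc (mu a) = lam a a
    intro a
    show hfun lam star (mkE lam 0 a) = lam a a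
    simp [hfun, mkE]

end CST
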